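/- Let I ⊆ (0,∞) be an open interval, let ζ, B : ℝ → ℝ be twice continuously differentiable on I with ζ(r) ≠ 0 and B(r) ≠ 0 for all r ∈ I, and suppose that for all r ∈ I: B''(r) − B'(r)/r − 2(ζ'(r)/ζ(r))²B(r) = 0. Fix r₀ ∈ I and σ, ε ∈ ℝ, and define Z : I → ℝ by Z(r) = σ + ε ∫_{r₀}^{r} s/B(s)² ds. Then (ζ, B·Z) satisfies the same equation on I, i.e. (B·Z)''(r) − (B·Z)'(r)/r − 2(ζ'(r)/ζ(r))²(B·Z)(r) = 0 for all r ∈ I. -/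

import Mathlib

/-- **Isotropic 2.**  If `(ζ, B)` satisfies `B'' − B'/r − 2(ζ'/ζ)²B = 0` on an open interval
of positive reals, then so does `(ζ, B·Z)`, where `Z(r) = σ + ε ∫ r/B²`. -/
theorem isotropic_two
    (a b : ℝ) (hab : 0 < a) (ζ B : ℝ → ℝ)
    (hζ : ContDiffOn ℝ 2 ζ (Set.Ioo a b))
    (hB : ContDiffOn ℝ 2 B (Set.Ioo a b))
    (hζ0 : ∀ r ∈ Set.Ioo a b, ζ r ≠ 0)
    (hB0 : ∀ r ∈ Set.Ioo a b, B r ≠ 0)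
    (hODE : ∀ r ∈ Set.Ioo a b,
      deriv (deriv B) r - deriv B r / r - 2 * (deriv ζ r / ζ r) ^ 2 * B r = 0)
    (r₀ : ℝ) (hr₀ : r₀ ∈ Set.Ioo a b) (σ ε : ℝ) (Z : ℝ → ℝ)
    (hZ : ∀ r ∈ Set.Ioo a b, Z r = σ + ε * ∫ s in r₀..r, s / (B s) ^ 2) :
    ∀ r ∈ Set.Ioo a b,
      deriv (deriv (fun x => B x * Z x)) r - deriv (fun x => B x * Z x) r / r
        - 2 * (deriv ζ r / ζ r) ^ 2 * (B r * Z r) = 0 := by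
  have hU : IsOpen (Set.Ioo a b) := isOpen_Ioo
  set g : ℝ → ℝ := fun s => s / B s ^ 2 with hgdef
  have hgcont : ContinuousOn g (Set.Ioo a b) :=
    continuousOn_id.div (hB.continuousOn.pow 2) (fun x hx => pow_ne_zero 2 (hB0 x hx))
  set F : ℝ → ℝ := fun s => ∫ t in r₀..s, g t with hFdef
  -- derivative of B at points of the interval
  have hB1 : ∀ x ∈ Set.Ioo a b, HasDerivAt B (deriv B x) x := fun x hx =>
    ((hB.differentiableOn (by norm_num)).differentiableAt (hU.mem_nhds hx)).hasDerivAt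
  -- derivative of deriv B
  have hBd : ContDiffOn ℝ 1 (deriv B) (Set.Ioo a b) :=
    hB.deriv_of_isOpen hU (by norm_num)
  have hB2 : ∀ x ∈ Set.Ioo a b, HasDerivAt (deriv B) (deriv (deriv B) x) x := fun x hx =>
    ((hBd.differentiableOn (by norm_num)).differentiableAt (hU.mem_nhds hx)).hasDerivAt
  -- derivative of F
  have hF : ∀ x ∈ Set.Ioo a b, HasDerivAt F (g x) x := by
    intro x hx
    have hsub : Set.uIcc r₀ x ⊆ Set.Ioo a b := Set.ordConnected_Ioo.uIcc_subset hr₀ hx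
    have hint : IntervalIntegrable g MeasureTheory.volume r₀ x :=
      (hgcont.mono hsub).intervalIntegrable
    exact intervalIntegral.integral_hasDerivAt_right hint
      ((hgcont.stronglyMeasurableAtFilter hU) x hx) (hgcont.continuousAt (hU.mem_nhds hx))
  -- first derivative formula
  set f1 : ℝ → ℝ := fun x => deriv B x * (σ + ε * F x) + B x * (ε * g x) with hf1def
  have hderiv1 : ∀ x ∈ Set.Ioo a b, deriv (fun y => B y * Z y) x = f1 x := by
    intro x hx
    have heq : (fun y => B y * Z y) =ᶠ[nhds x] fun y => B y * (σ + ε * F y) :=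
      Filter.eventually_of_mem (hU.mem_nhds hx) (fun y hy => by simp [hZ y hy, hFdef, hgdef])
    have hd : HasDerivAt (fun y => B y * (σ + ε * F y)) (f1 x) x := by
      have := (hB1 x hx).mul ((hasDerivAt_const x σ).add ((hF x hx).const_mul ε))
      exact this.congr_deriv (by simp only [Pi.add_apply, zero_add, hf1def])
    rw [heq.deriv_eq, hd.deriv]
  intro r hr
  have hr0 : r ≠ 0 := ne_of_gt (lt_trans hab hr.1)
  have hBr : B r ≠ 0 := hB0 r hr
  -- second derivative
  have heq2 : deriv (fun y => B y * Z y) =ᶠ[nhds r] f1 :=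
    Filter.eventually_of_mem (hU.mem_nhds hr) hderiv1
  have hgd : HasDerivAt g ((1 * B r ^ 2 - r * (2 * B r ^ 1 * deriv B r)) / (B r ^ 2) ^ 2) r :=
    (hasDerivAt_id r).div ((hB1 r hr).pow 2) (pow_ne_zero 2 hBr)
  have hd2 : HasDerivAt f1
      (deriv (deriv B) r * (σ + ε * F r) + deriv B r * (ε * g r)
        + (deriv B r * (ε * g r) + B r * (ε * ((1 * B r ^ 2 - r * (2 * B r ^ 1 * deriv B r)) / (B r ^ 2) ^ 2)))) r := by
    have h1 := (hB2 r hr).mul ((hasDerivAt_const r σ).add ((hF r hr).const_mul ε))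
    have h2 := (hB1 r hr).mul (hgd.const_mul ε)
    have := h1.add h2
    exact this.congr_deriv (by simp only [Pi.add_apply, zero_add])
  have key : deriv (deriv (fun x => B x * Z x)) r
      = deriv (deriv B) r * (σ + ε * F r) + deriv B r * (ε * g r)
        + (deriv B r * (ε * g r) + B r * (ε * ((1 * B r ^ 2 - r * (2 * B r ^ 1 * deriv B r)) / (B r ^ 2) ^ 2))) := by
    rw [heq2.deriv_eq, hd2.deriv]
  have hODEr : deriv (deriv B) r = deriv B r / r + 2 * (deriv ζ r / ζ r) ^ 2 * B r := by
    have := hODE r hr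
    linarith
  rw [key, hderiv1 r hr, hZ r hr, hf1def, hODEr]
  simp only [hgdef, hFdef]
  field_simp
  ring
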